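/- For n ≥ 2 and 0 ≤ k ≤ n, no two distinct words of the term u_{n,k} = x₁⋯xₙ + Σ_{i=1}^{k} xᵢxₙ₊₁ + Σ_{i=k+1}^{n} xᵢxₙ₊₁yᵢ are comparable under divisibility in the free commutative monoid: if p and q are words in u_{n,k} and p divides q, then p = q. Moreover, no word of u_{n,k} is divisible by the square of a variable. -/

import Mathlib

/-- The word x₁x₂⋯xₙ, with variable xᵢ encoded as the natural number i. -/
def xword (n : ℕ) : Multiset ℕ :=
  (↑((List.range n).map (· + 1)) : Multiset ℕ)

/-- The term u_{n,k} = x₁⋯xₙ + Σ_{i=1}^{k} xᵢxₙ₊₁ + Σ_{i=k+1}^{n} xᵢxₙ₊₁yᵢ, as a list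
of words (multisets of variables); variable xᵢ is encoded as i and yᵢ as n + 1 + i. -/
def unk (n k : ℕ) : List (Multiset ℕ) :=
  xword n ::
    ((List.range k).map (fun i => ({i + 1, n + 1} : Multiset ℕ)) ++
     (List.range (n - k)).map
       (fun i => ({k + i + 1, n + 1, n + 1 + (k + i + 1)} : Multiset ℕ)))

lemma mem_xword {n m : ℕ} : m ∈ xword n ↔ 1 ≤ m ∧ m ≤ n := by
  simp only [xword, Multiset.mem_coe, List.mem_map, List.mem_range]
  constructor
  · rintro ⟨i, hi, rfl⟩; omega
  · rintro ⟨h1, h2⟩; exact ⟨m - 1, by omega, by omega⟩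

/-- For n ≥ 2 and 0 ≤ k ≤ n, no two distinct words of u_{n,k} are comparable under
divisibility in the free commutative monoid (multiset containment), and no word of
u_{n,k} is divisible by the square of a variable. -/
theorem stmt18 : ∀ n k : ℕ, 2 ≤ n → k ≤ n →
    ((∀ p ∈ unk n k, ∀ q ∈ unk n k, p ≤ q → p = q) ∧
     (∀ w ∈ unk n k, ∀ x : ℕ, ¬ ({x, x} : Multiset ℕ) ≤ w)) := by
  intro n k hn hk
  constructor
  · intro p hp q hq hpq
    simp only [unk, List.mem_cons, List.mem_append, List.mem_map, List.mem_range] at hp hq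
    rcases hp with rfl | ⟨i, hi, rfl⟩ | ⟨i, hi, rfl⟩ <;>
      rcases hq with rfl | ⟨j, hj, rfl⟩ | ⟨j, hj, rfl⟩
    · rfl
    · -- xword ≤ pair
      have h1 : (1 : ℕ) ∈ xword n := mem_xword.mpr ⟨by omega, by omega⟩
      have h2 : (2 : ℕ) ∈ xword n := mem_xword.mpr ⟨by omega, by omega⟩
      have h1' := Multiset.mem_of_le hpq h1
      have h2' := Multiset.mem_of_le hpq h2
      simp only [Multiset.insert_eq_cons, Multiset.mem_cons, Multiset.mem_singleton] at h1' h2'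
      omega
    · -- xword ≤ triple
      have h1 : (1 : ℕ) ∈ xword n := mem_xword.mpr ⟨by omega, by omega⟩
      have h2 : (2 : ℕ) ∈ xword n := mem_xword.mpr ⟨by omega, by omega⟩
      have h1' := Multiset.mem_of_le hpq h1
      have h2' := Multiset.mem_of_le hpq h2
      simp only [Multiset.insert_eq_cons, Multiset.mem_cons, Multiset.mem_singleton] at h1' h2'
      omega
    · -- pair ≤ xword
      have h : (n + 1 : ℕ) ∈ ({i + 1, n + 1} : Multiset ℕ) := by
        simp [Multiset.insert_eq_cons]
      have h' := mem_xword.mp (Multiset.mem_of_le hpq h)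
      omega
    · -- pair ≤ pair
      have h : (i + 1 : ℕ) ∈ ({i + 1, n + 1} : Multiset ℕ) := by
        simp [Multiset.insert_eq_cons]
      have h' := Multiset.mem_of_le hpq h
      simp only [Multiset.insert_eq_cons, Multiset.mem_cons, Multiset.mem_singleton] at h'
      have : i = j := by omega
      subst this; rfl
    · -- pair ≤ triple
      have h : (i + 1 : ℕ) ∈ ({i + 1, n + 1} : Multiset ℕ) := by
        simp [Multiset.insert_eq_cons]
      have h' := Multiset.mem_of_le hpq h
      simp only [Multiset.insert_eq_cons, Multiset.mem_cons, Multiset.mem_singleton] at h'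
      omega
    · -- triple ≤ xword
      have h : (n + 1 : ℕ) ∈ ({k + i + 1, n + 1, n + 1 + (k + i + 1)} : Multiset ℕ) := by
        simp [Multiset.insert_eq_cons]
      have h' := mem_xword.mp (Multiset.mem_of_le hpq h)
      omega
    · -- triple ≤ pair
      have h : (n + 1 + (k + i + 1) : ℕ) ∈
          ({k + i + 1, n + 1, n + 1 + (k + i + 1)} : Multiset ℕ) := by
        simp [Multiset.insert_eq_cons]
      have h' := Multiset.mem_of_le hpq h
      simp only [Multiset.insert_eq_cons, Multiset.mem_cons, Multiset.mem_singleton] at h'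
      omega
    · -- triple ≤ triple
      have h : (k + i + 1 : ℕ) ∈
          ({k + i + 1, n + 1, n + 1 + (k + i + 1)} : Multiset ℕ) := by
        simp [Multiset.insert_eq_cons]
      have h' := Multiset.mem_of_le hpq h
      simp only [Multiset.insert_eq_cons, Multiset.mem_cons, Multiset.mem_singleton] at h'
      have : i = j := by omega
      subst this; rfl
  · intro w hw x hx
    have hcount := Multiset.count_le_of_le x hx
    have hxx : Multiset.count x ({x, x} : Multiset ℕ) = 2 := by
      simp [Multiset.insert_eq_cons]
    rw [hxx] at hcount
    have hnd : w.Nodup := by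
      simp only [unk, List.mem_cons, List.mem_append, List.mem_map, List.mem_range] at hw
      rcases hw with rfl | ⟨i, hi, rfl⟩ | ⟨i, hi, rfl⟩
      · simp only [xword, Multiset.coe_nodup]
        exact (List.nodup_range (n := n)).map (fun a b => by omega)
      · simp only [Multiset.insert_eq_cons, Multiset.nodup_cons, Multiset.mem_cons,
          Multiset.mem_singleton, Multiset.nodup_singleton, and_true]
        omega
      · simp only [Multiset.insert_eq_cons, Multiset.nodup_cons, Multiset.mem_cons,
          Multiset.mem_singleton, Multiset.nodup_singleton, and_true, not_or]
        omega
    have := Multiset.nodup_iff_count_le_one.mp hnd x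
    omega
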